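/- Let (X,d) be a metric space and define the modified cross-ratio ⟨x1,x2,x3,x4⟩ = (min(d(x1,x3), d(x2,x4))) / (min(d(x1,x4), d(x2,x3))) for four distinct points. Then for all distinct x1,x2,x3,x4 in X, (1/3)·min(t, √t) ≤ ⟨x1,x2,x3,x4⟩ ≤ 3·max(t, √t), where t = [x1,x2,x3,x4] = (d(x1,x3)·d(x2,x4))/(d(x1,x4)·d(x2,x3)) is the usual cross-ratio. -/

import Mathlib

private lemma aux_upper (a b c e : ℝ) (ha : 0 < a) (hb : 0 < b) (hc : 0 < c) (he : 0 < e)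
    (h1 : c ≤ a + b + e) (h2 : e ≤ a + b + c) :
    min a b / min c e ≤ 3 * max (a * b / (c * e)) (Real.sqrt (a * b / (c * e))) := by
  have hmab : min a b * max a b = a * b := min_mul_max a b
  have hmce : min c e * max c e = c * e := min_mul_max c e
  have hma : 0 < min a b := lt_min ha hb
  have hMa : 0 < max a b := lt_max_iff.mpr (Or.inl ha)
  have hmc : 0 < min c e := lt_min hc he
  have hMc : 0 < max c e := lt_max_iff.mpr (Or.inl hc)
  have hce : 0 < c * e := mul_pos hc he
  rcases le_total (max c e) (3 * max a b) with hcase | hcase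
  · have h3 : min a b / min c e ≤ 3 * (a * b) / (c * e) := by
      rw [div_le_div_iff₀ hmc hce]
      nlinarith [mul_le_mul_of_nonneg_left hcase (mul_pos hma hmc).le]
    calc min a b / min c e ≤ 3 * (a * b) / (c * e) := h3
      _ = 3 * (a * b / (c * e)) := by ring
      _ ≤ 3 * max (a * b / (c * e)) (Real.sqrt (a * b / (c * e))) := by
          have := le_max_left (a * b / (c * e)) (Real.sqrt (a * b / (c * e)))
          linarith
  · -- max c e ≥ 3 max a b; then min c e ≥ max c e / 3
    have key : max c e ≤ 3 * min c e := by
      have la := le_max_left a b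
      have lb := le_max_right a b
      rcases le_total c e with h | h
      · rw [max_eq_right h] at hcase; rw [max_eq_right h, min_eq_left h]; linarith
      · rw [max_eq_left h] at hcase; rw [max_eq_left h, min_eq_right h]; linarith
    have hsq : (min a b / (3 * min c e)) ^ 2 ≤ a * b / (c * e) := by
      rw [div_pow, div_le_div_iff₀ (by positivity) hce]
      nlinarith [mul_le_mul_of_nonneg_left key (mul_pos (mul_pos hma hma) hmc).le,
        mul_le_mul_of_nonneg_left (min_le_max (a := a) (b := b))
          (mul_pos hma (mul_pos hmc hmc)).le]
    have hs : min a b / (3 * min c e) ≤ Real.sqrt (a * b / (c * e)) :=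
      Real.le_sqrt' (by positivity) |>.mpr hsq
    calc min a b / min c e = 3 * (min a b / (3 * min c e)) := by
          field_simp
      _ ≤ 3 * Real.sqrt (a * b / (c * e)) := by linarith
      _ ≤ 3 * max (a * b / (c * e)) (Real.sqrt (a * b / (c * e))) := by
          have := le_max_right (a * b / (c * e)) (Real.sqrt (a * b / (c * e)))
          linarith

private lemma aux_lower (a b c e : ℝ) (ha : 0 < a) (hb : 0 < b) (hc : 0 < c) (he : 0 < e)
    (h1 : a ≤ c + e + b) (h2 : b ≤ c + e + a) :
    (1 / 3) * min (a * b / (c * e)) (Real.sqrt (a * b / (c * e))) ≤ min a b / min c e := by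
  have H := aux_upper c e a b hc he ha hb (by linarith) (by linarith)
  have hma : 0 < min a b := lt_min ha hb
  have hmc : 0 < min c e := lt_min hc he
  have hab : 0 < a * b := mul_pos ha hb
  have hce : 0 < c * e := mul_pos hc he
  rcases max_choice (c * e / (a * b)) (Real.sqrt (c * e / (a * b))) with hm | hm <;>
    rw [hm] at H
  · -- min c e / min a b ≤ 3 * (c*e/(a*b)) ⟹ (1/3) t ≤ min a b / min c e
    have h3 : (1 / 3) * (a * b / (c * e)) ≤ min a b / min c e := by
      rw [show 3 * (c * e / (a * b)) = 3 * (c * e) / (a * b) by ring,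
        div_le_div_iff₀ hma hab] at H
      rw [show (1:ℝ) / 3 * (a * b / (c * e)) = a * b / (3 * (c * e)) by ring,
        div_le_div_iff₀ (by positivity) hmc]
      nlinarith
    have := min_le_left (a * b / (c * e)) (Real.sqrt (a * b / (c * e)))
    linarith
  · -- min c e / min a b ≤ 3 √(c*e/(a*b)) ⟹ (1/3) √t ≤ min a b / min c e
    have hsq : (min c e / min a b) ^ 2 ≤ 9 * (c * e / (a * b)) := by
      calc (min c e / min a b) ^ 2 ≤ (3 * Real.sqrt (c * e / (a * b))) ^ 2 := by
            apply pow_le_pow_left₀ (by positivity) H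
        _ = 9 * (c * e / (a * b)) := by
            rw [mul_pow, Real.sq_sqrt (by positivity)]; ring
    have ht : a * b / (c * e) ≤ 9 * (min a b / min c e) ^ 2 := by
      rw [div_pow, show 9 * (c * e / (a * b)) = 9 * (c * e) / (a * b) by ring,
        div_le_div_iff₀ (pow_pos hma 2) hab] at hsq
      rw [div_pow, show 9 * ((min a b) ^ 2 / (min c e) ^ 2) = 9 * (min a b) ^ 2 / (min c e) ^ 2 by ring,
        div_le_div_iff₀ hce (pow_pos hmc 2)]
      nlinarith
    have hs : Real.sqrt (a * b / (c * e)) ≤ 3 * (min a b / min c e) := by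
      have := Real.sqrt_le_sqrt ht
      rwa [show 9 * (min a b / min c e) ^ 2 = (3 * (min a b / min c e)) ^ 2 by ring,
        Real.sqrt_sq (by positivity)] at this
    have := min_le_right (a * b / (c * e)) (Real.sqrt (a * b / (c * e)))
    have h0 : 0 < min a b / min c e := by positivity
    linarith

/-- Comparison between the modified cross-ratio and the usual cross-ratio
in a metric space, for four pairwise distinct points. -/
theorem modified_crossRatio_comparison {X : Type*} [MetricSpace X] (x1 x2 x3 x4 : X)
    (h12 : x1 ≠ x2) (h13 : x1 ≠ x3) (h14 : x1 ≠ x4)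
    (h23 : x2 ≠ x3) (h24 : x2 ≠ x4) (h34 : x3 ≠ x4) :
    (1 / 3) * min (dist x1 x3 * dist x2 x4 / (dist x1 x4 * dist x2 x3))
        (Real.sqrt (dist x1 x3 * dist x2 x4 / (dist x1 x4 * dist x2 x3)))
      ≤ min (dist x1 x3) (dist x2 x4) / min (dist x1 x4) (dist x2 x3) ∧
    min (dist x1 x3) (dist x2 x4) / min (dist x1 x4) (dist x2 x3)
      ≤ 3 * max (dist x1 x3 * dist x2 x4 / (dist x1 x4 * dist x2 x3))
        (Real.sqrt (dist x1 x3 * dist x2 x4 / (dist x1 x4 * dist x2 x3))) := by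
  have ha : 0 < dist x1 x3 := dist_pos.mpr h13
  have hb : 0 < dist x2 x4 := dist_pos.mpr h24
  have hc : 0 < dist x1 x4 := dist_pos.mpr h14
  have he : 0 < dist x2 x3 := dist_pos.mpr h23
  have t1 : dist x1 x4 ≤ dist x1 x3 + dist x2 x4 + dist x2 x3 := by
    have h := dist_triangle4 x1 x3 x2 x4
    rw [dist_comm x3 x2] at h; linarith
  have t2 : dist x2 x3 ≤ dist x1 x3 + dist x2 x4 + dist x1 x4 := by
    have h := dist_triangle4 x2 x4 x1 x3
    rw [dist_comm x4 x1] at h; linarith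
  have t3 : dist x1 x3 ≤ dist x1 x4 + dist x2 x3 + dist x2 x4 := by
    have h := dist_triangle4 x1 x4 x2 x3
    rw [dist_comm x4 x2] at h; linarith
  have t4 : dist x2 x4 ≤ dist x1 x4 + dist x2 x3 + dist x1 x3 := by
    have h := dist_triangle4 x2 x3 x1 x4
    rw [dist_comm x3 x1] at h; linarith
  exact ⟨aux_lower _ _ _ _ ha hb hc he t3 t4, aux_upper _ _ _ _ ha hb hc he t1 t2⟩
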